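/- arXiv:1106.5124 — 3 statements merged into one kernel-verified Lean document; each statement's English description precedes it below -/
import Mathlib

section
/- Let t : ℕ → ℕ → ℕ → ℕ and define f(n,i) to be the largest x ≤ i such that for all x' < x there exists y < i with t(x',y,n) = 0. Then for each n, the statement (∀ x, ∃ y, t(x,y,n) = 0) holds if and only if the function i ↦ f(n,i) is unbounded. -/
open Filter Topology
open scoped Classical

/-- `f t n i` is the largest `x ≤ i` such that `∀ x' < x, ∃ y < i, t x' y n = 0`. -/
noncomputable def f (t : ℕ → ℕ → ℕ → ℕ) (n i : ℕ) : ℕ :=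
  Nat.findGreatest (fun x => ∀ x' < x, ∃ y < i, t x' y n = 0) i

/-- `∀ x, ∃ y, t x y n = 0` holds iff `i ↦ f t n i` is unbounded. -/
theorem stmt2 (t : ℕ → ℕ → ℕ → ℕ) (n : ℕ) :
    (∀ x, ∃ y, t x y n = 0) ↔ (∀ k, ∃ i, k < f t n i) := by
  constructor
  · intro h k
    choose g hg using h
    set i := max (k + 1) ((Finset.range (k + 1)).sup g + 1) with hi
    refine ⟨i, ?_⟩
    have hle : k + 1 ≤ f t n i := by
      apply Nat.le_findGreatest (le_max_left _ _)
      intro x' hx'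
      refine ⟨g x', ?_, hg x'⟩
      calc g x' ≤ (Finset.range (k + 1)).sup g :=
            Finset.le_sup (Finset.mem_range.mpr hx')
        _ < i := lt_of_lt_of_le (Nat.lt_succ_self _) (le_max_right _ _)
    omega
  · intro h x
    obtain ⟨i, hi⟩ := h x
    have hspec : ∀ x' < f t n i, ∃ y < i, t x' y n = 0 :=
      Nat.findGreatest_spec (P := fun x => ∀ x' < x, ∃ y < i, t x' y n = 0)
        (Nat.zero_le i) (by intro x' hx'; omega)
    obtain ⟨y, _, hy⟩ := hspec x hi
    exact ⟨y, hy⟩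
end

section
/- Let t : ℕ → ℕ → ℕ → ℕ and f as above, and in ℓ² define y_{n,i} := e_{⟨n, f(n,i)⟩} where ⟨·,·⟩ is a pairing function on ℕ. If ∀x ∃y, t(x,y,n)=0, then the sequence (y_{n,i})_i converges weakly to 0 in ℓ². -/
open Filter Topology
open scoped RealInnerProductSpace Classical ENNReal

/-- The canonical orthonormal basis of ℓ². -/
noncomputable def E (n : ℕ) : lp (fun _ : ℕ => ℝ) 2 := lp.single 2 n (1 : ℝ)

/-- The sequence `y_{n,i} := e_{⟨n, f(n,i)⟩}` in ℓ². -/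
noncomputable def Y (t : ℕ → ℕ → ℕ → ℕ) (n i : ℕ) : lp (fun _ : ℕ => ℝ) 2 :=
  E (Nat.pair n (f t n i))

/-- If `∀ x, ∃ y, t x y n = 0`, then `(y_{n,i})_i` converges weakly to `0` in ℓ². -/
theorem stmt3 (t : ℕ → ℕ → ℕ → ℕ) (n : ℕ) (h : ∀ x, ∃ y, t x y n = 0) :
    ∀ z : lp (fun _ : ℕ => ℝ) 2,
      Tendsto (fun i => ⟪z, Y t n i⟫) atTop (𝓝 0) := by
  intro z
  -- f t n i → ∞
  have hf : Tendsto (fun i => f t n i) atTop atTop := by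
    rw [tendsto_atTop]
    intro N
    set g : ℕ → ℕ := fun x => (h x).choose with hg
    set M : ℕ := ((Finset.range N).sup g) + 1 with hM
    filter_upwards [eventually_ge_atTop (max N M)] with i hi
    have hN : N ≤ i := le_trans (le_max_left _ _) hi
    have hMi : M ≤ i := le_trans (le_max_right _ _) hi
    refine Nat.le_findGreatest hN ?_
    intro x' hx'
    refine ⟨g x', ?_, (h x').choose_spec⟩
    have : g x' ≤ (Finset.range N).sup g :=
      Finset.le_sup (Finset.mem_range.mpr hx')
    omega
  -- pair n (f t n i) → ∞
  have hk : Tendsto (fun i => Nat.pair n (f t n i)) atTop atTop :=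
    tendsto_atTop_mono (fun i => Nat.right_le_pair n (f t n i)) hf
  -- coordinates of z tend to 0
  have hz : Tendsto (fun k => (z : ∀ _ : ℕ, ℝ) k) atTop (𝓝 0) := by
    have hs : Summable (fun k => ‖(z : ∀ _ : ℕ, ℝ) k‖ ^ (2 : ℝ)) := by
      have := lp.memℓp z
      rwa [memℓp_gen_iff (by norm_num : 0 < (2 : ℝ≥0∞).toReal)] at this
    have h0 : Tendsto (fun k => ‖(z : ∀ _ : ℕ, ℝ) k‖ ^ (2 : ℝ)) atTop (𝓝 0) :=
      hs.tendsto_atTop_zero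
    rw [tendsto_zero_iff_norm_tendsto_zero]
    have : Tendsto (fun k => (‖(z : ∀ _ : ℕ, ℝ) k‖ ^ (2 : ℝ)) ^ ((2 : ℝ)⁻¹))
        atTop (𝓝 (0 ^ ((2 : ℝ)⁻¹))) :=
      (Real.continuousAt_rpow_const 0 (2 : ℝ)⁻¹ (Or.inr (by norm_num))).tendsto.comp h0
    have h1 : (fun k => (‖(z : ∀ _ : ℕ, ℝ) k‖ ^ (2 : ℝ)) ^ ((2 : ℝ)⁻¹))
        = fun k => ‖(z : ∀ _ : ℕ, ℝ) k‖ := by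
      funext k
      rw [← Real.rpow_mul (norm_nonneg _)]
      norm_num
    rw [h1, Real.zero_rpow (by norm_num)] at this
    exact this
  have := hz.comp hk
  refine this.congr fun i => ?_
  simp [Y, E, lp.inner_single_right, real_inner_comm]
end

section
/- For every t : ℕ → ℕ → ℕ → ℕ there exists a sequence (x_i) in ℓ² with ‖x_i‖ ≤ 1, computable primitively from t, such that from any weak cluster point x of (x_i) one can define the characteristic function of the Π⁰₂ set {n : ∀ a ∃ b, t(a,b,n) = 0}: namely, ∀x ∃y t(x,y,n)=0 holds iff ‖P_{M_n}(x)‖ = 0, where P_{M_n} is the projection onto the closed span of {e_{⟨n,k⟩} : k ∈ ℕ}, and otherwise ‖P_{M_n}(x)‖ = 2^{-(n+1)/2}. -/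
open Filter Topology
open scoped RealInnerProductSpace Classical
set_option maxHeartbeats 1000000
set_option synthInstance.maxHeartbeats 400000

/-- `M n` is the closed span of `{e_{⟨n,k⟩} : k ∈ ℕ}` in ℓ². -/
noncomputable def M (n : ℕ) : Submodule ℝ (lp (fun _ : ℕ => ℝ) 2) :=
  (Submodule.span ℝ (Set.range fun k => E (Nat.pair n k))).topologicalClosure

instance (n : ℕ) : CompleteSpace (M n) :=
  (Submodule.isClosed_topologicalClosure _).completeSpace_coe

lemma E_inner (i j : ℕ) : ⟪E i, E j⟫ = if i = j then (1:ℝ) else 0 := by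
  rw [E, lp.inner_single_left]
  simp [E, lp.single_apply, RCLike.inner_apply, eq_comm, Pi.single_apply]

lemma orthonormal_E : Orthonormal ℝ E := by
  rw [orthonormal_iff_ite]
  intro i j; exact E_inner i j

lemma E_norm (i : ℕ) : ‖E i‖ = 1 := orthonormal_E.1 i

lemma E_mem_M (n k : ℕ) : E (Nat.pair n k) ∈ M n :=
  Submodule.le_topologicalClosure _ (Submodule.subset_span ⟨k, rfl⟩)

lemma mem_M_orthogonal {n : ℕ} {v : lp (fun _ : ℕ => ℝ) 2}
    (h : ∀ k, ⟪E (Nat.pair n k), v⟫ = 0) : v ∈ (M n)ᗮ := by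
  have hspan : v ∈ (Submodule.span ℝ (Set.range fun k => E (Nat.pair n k)))ᗮ := by
    rw [Submodule.mem_orthogonal]
    intro u hu
    induction hu using Submodule.span_induction with
    | mem x hx => obtain ⟨k, rfl⟩ := hx; exact h k
    | zero => simp
    | add x y _ _ hx hy => rw [inner_add_left, hx, hy, add_zero]
    | smul a x _ hx => rw [inner_smul_left, hx, mul_zero]
  have : (M n)ᗮ = (Submodule.span ℝ (Set.range fun k => E (Nat.pair n k)))ᗮ := by
    rw [M, ← Submodule.orthogonal_orthogonal_eq_closure]
    exact Submodule.orthogonal_orthogonal (𝕜 := ℝ)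
      (Submodule.span ℝ (Set.range fun k => E (Nat.pair n k)))ᗮ
  rwa [this]

lemma f_eventually_gt {t : ℕ → ℕ → ℕ → ℕ} {n : ℕ} (hA : ∀ a, ∃ b, t a b n = 0) (k : ℕ) :
    ∀ᶠ i in atTop, k < f t n i := by
  choose B hB using hA
  set N := (Finset.range (k + 1)).sup B + k + 2 with hN
  filter_upwards [eventually_ge_atTop N] with i hi
  have h1 : k + 1 ≤ i := by omega
  have h2 : ∀ x' < k + 1, ∃ y < i, t x' y n = 0 := by
    intro x hx
    refine ⟨B x, ?_, hB x⟩
    have : B x ≤ (Finset.range (k + 1)).sup B :=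
      Finset.le_sup (Finset.mem_range.mpr hx)
    omega
  exact Nat.lt_of_succ_le (Nat.le_findGreatest h1 h2)


lemma f_eventually_eq {t : ℕ → ℕ → ℕ → ℕ} {n a₀ : ℕ}
    (hmin : ∀ x < a₀, ∃ b, t x b n = 0) (ha₀ : ∀ b, t a₀ b n ≠ 0) :
    ∀ᶠ i in atTop, f t n i = a₀ := by
  have hB : ∀ x, ∃ b, x < a₀ → t x b n = 0 := by
    intro x
    by_cases h : x < a₀
    · exact (hmin x h).imp fun b hb _ => hb
    · exact ⟨0, fun h' => absurd h' h⟩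
  choose B hB using hB
  set N := (Finset.range a₀).sup B + a₀ + 2 with hN
  filter_upwards [eventually_ge_atTop N] with i hi
  have hle : f t n i ≤ a₀ := by
    by_contra h
    push_neg at h
    have hne : f t n i ≠ 0 := by omega
    have hP := Nat.findGreatest_of_ne_zero (rfl :
      Nat.findGreatest (fun x => ∀ x' < x, ∃ y < i, t x' y n = 0) i = f t n i) hne
    obtain ⟨y, _, hy⟩ := hP a₀ h
    exact ha₀ y hy
  have hge : a₀ ≤ f t n i := by
    refine Nat.le_findGreatest (by omega) ?_
    intro x hx
    refine ⟨B x, ?_, hB x hx⟩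
    have : B x ≤ (Finset.range a₀).sup B := Finset.le_sup (Finset.mem_range.mpr hx)
    omega
  omega


lemma inner_x (t : ℕ → ℕ → ℕ → ℕ) (i n k : ℕ) :
    ⟪E (Nat.pair n k), ∑ n' ∈ Finset.range (i + 1),
        (2 : ℝ) ^ (-((n' : ℝ) + 1) / 2) • Y t n' i⟫
      = if n ≤ i ∧ f t n i = k then (2 : ℝ) ^ (-((n : ℝ) + 1) / 2) else 0 := by
  rw [inner_sum]
  have : ∀ n' ∈ Finset.range (i + 1),
      ⟪E (Nat.pair n k), (2 : ℝ) ^ (-((n' : ℝ) + 1) / 2) • Y t n' i⟫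
        = if n = n' then (if f t n' i = k then (2 : ℝ) ^ (-((n' : ℝ) + 1) / 2) else 0)
          else 0 := by
    intro n' _
    rw [real_inner_smul_right, Y, E_inner]
    simp only [Nat.pair_eq_pair]
    by_cases h1 : n = n' <;> by_cases h2 : f t n' i = k <;>
      simp [h1, h2, eq_comm (a := k)]
  rw [Finset.sum_congr rfl this, Finset.sum_ite_eq]
  by_cases hni : n ≤ i <;> by_cases h2 : f t n i = k <;>
    simp [hni, h2, Nat.lt_succ_iff]

lemma csq (n : ℕ) :
    (2 : ℝ) ^ (-((n : ℝ) + 1) / 2) * (2 : ℝ) ^ (-((n : ℝ) + 1) / 2)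
      = ((1 : ℝ) / 2) ^ (n + 1) := by
  rw [← Real.rpow_add two_pos]
  have h1 : -((n : ℝ) + 1) / 2 + -((n : ℝ) + 1) / 2 = -(((n + 1 : ℕ) : ℝ)) := by
    push_cast; ring
  rw [h1, Real.rpow_neg (by norm_num), Real.rpow_natCast]
  simp [one_div, inv_pow]

lemma cpos (n : ℕ) : (0 : ℝ) < (2 : ℝ) ^ (-((n : ℝ) + 1) / 2) :=
  Real.rpow_pos_of_pos two_pos _

lemma norm_x_le (t : ℕ → ℕ → ℕ → ℕ) (i : ℕ) :
    ‖∑ n ∈ Finset.range (i + 1), (2 : ℝ) ^ (-((n : ℝ) + 1) / 2) • Y t n i‖ ≤ 1 := by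
  have horth : Orthonormal ℝ (fun n => Y t n i) := by
    have : (fun n => Y t n i) = E ∘ fun n => Nat.pair n (f t n i) := rfl
    rw [this]
    exact orthonormal_E.comp _ fun a b h => (Nat.pair_eq_pair.mp h).1
  have hsq : ‖∑ n ∈ Finset.range (i + 1), (2 : ℝ) ^ (-((n : ℝ) + 1) / 2) • Y t n i‖ ^ 2
      = ∑ n ∈ Finset.range (i + 1), ((1 : ℝ) / 2) ^ (n + 1) := by
    rw [← real_inner_self_eq_norm_sq, horth.inner_sum]
    exact Finset.sum_congr rfl fun n _ => by simpa [Real.rpow_natCast, starRingEnd_apply] using csq n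
  have hle : ∑ n ∈ Finset.range (i + 1), ((1 : ℝ) / 2) ^ (n + 1) ≤ 1 := by
    have := sum_geometric_two_le (i + 1)
    calc ∑ n ∈ Finset.range (i + 1), ((1 : ℝ) / 2) ^ (n + 1)
        = (∑ n ∈ Finset.range (i + 1), ((1 : ℝ) / 2) ^ n) * (1 / 2) := by
          rw [Finset.sum_mul]; exact Finset.sum_congr rfl fun n _ => by ring
      _ ≤ 2 * (1 / 2) := by nlinarith
      _ = 1 := by norm_num
  nlinarith [norm_nonneg (∑ n ∈ Finset.range (i + 1),
    (2 : ℝ) ^ (-((n : ℝ) + 1) / 2) • Y t n i), hsq, hle]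

/-- For every `t` there is a bounded sequence `(x_i)` in ℓ², given by the explicit
primitive recursive formula `x_i = ∑_{n ≤ i} 2^{-(n+1)/2} y_{n,i}`, such that for any
weak cluster point `x` of `(x_i)` one has, for every `n`:
`∀ a ∃ b, t a b n = 0` iff `‖P_{M n} x‖ = 0`, and otherwise `‖P_{M n} x‖ = 2^{-(n+1)/2}`. -/
theorem stmt6 (t : ℕ → ℕ → ℕ → ℕ) :
    ∃ x : ℕ → lp (fun _ : ℕ => ℝ) 2,
      (x = fun i => ∑ n ∈ Finset.range (i + 1), (2 : ℝ) ^ (-((n : ℝ) + 1) / 2) • Y t n i) ∧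
      (∀ i, ‖x i‖ ≤ 1) ∧
      ∀ (X : lp (fun _ : ℕ => ℝ) 2) (φ : ℕ → ℕ), StrictMono φ →
        (∀ y : lp (fun _ : ℕ => ℝ) 2,
          Tendsto (fun m => ⟪y, x (φ m)⟫) atTop (𝓝 ⟪y, X⟫)) →
        ∀ n : ℕ,
          ((∀ a, ∃ b, t a b n = 0) ↔ ‖(Submodule.orthogonalProjectionOnto (M n) X : lp (fun _ : ℕ => ℝ) 2)‖ = 0) ∧
          (¬ (∀ a, ∃ b, t a b n = 0) →
            ‖(Submodule.orthogonalProjectionOnto (M n) X : lp (fun _ : ℕ => ℝ) 2)‖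
              = (2 : ℝ) ^ (-((n : ℝ) + 1) / 2)) := by
  refine ⟨_, rfl, norm_x_le t, ?_⟩
  intro X φ hφ hlim n
  have hcoord : ∀ k : ℕ,
      Tendsto (fun m => if n ≤ φ m ∧ f t n (φ m) = k
          then (2 : ℝ) ^ (-((n : ℝ) + 1) / 2) else 0)
        atTop (𝓝 ⟪E (Nat.pair n k), X⟫) := by
    intro k
    have h := hlim (E (Nat.pair n k))
    simpa only [inner_x] using h
  by_cases hA : ∀ a, ∃ b, t a b n = 0
  · -- Case A : projection is zero
    have hX0 : ∀ k, ⟪E (Nat.pair n k), X⟫ = 0 := by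
      intro k
      obtain ⟨N, hN⟩ := eventually_atTop.mp (f_eventually_gt hA k)
      have hev : ∀ᶠ m in atTop,
          (if n ≤ φ m ∧ f t n (φ m) = k
            then (2 : ℝ) ^ (-((n : ℝ) + 1) / 2) else 0) = 0 := by
        filter_upwards [eventually_ge_atTop N] with m hm
        have hk : k < f t n (φ m) := hN _ (le_trans hm hφ.le_apply)
        rw [if_neg]
        rintro ⟨-, h⟩
        omega
      exact tendsto_nhds_unique (hcoord k)
        (Filter.Tendsto.congr' (Filter.EventuallyEq.symm hev) tendsto_const_nhds)
    have hperp : X ∈ (M n)ᗮ := mem_M_orthogonal hX0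
    have hp : ‖(Submodule.orthogonalProjectionOnto (M n) X : lp (fun _ : ℕ => ℝ) 2)‖ = 0 := by
      rw [Submodule.orthogonalProjectionOnto_eq_zero_iff.mpr hperp]
      simp
    exact ⟨⟨fun _ => hp, fun _ => hA⟩, fun h => absurd hA h⟩
  · -- Case B
    have hA' := hA
    push_neg at hA
    set a₀ := Nat.find hA with ha₀
    have hspec : ∀ b, t a₀ b n ≠ 0 := Nat.find_spec hA
    have hmin : ∀ x < a₀, ∃ b, t x b n = 0 := by
      intro x hx
      have h := Nat.find_min hA hx
      push_neg at h
      exact h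
    obtain ⟨N, hN⟩ := eventually_atTop.mp (f_eventually_eq hmin hspec)
    have hc0 : ⟪E (Nat.pair n a₀), X⟫ = (2 : ℝ) ^ (-((n : ℝ) + 1) / 2) := by
      have hev : ∀ᶠ m in atTop,
          (if n ≤ φ m ∧ f t n (φ m) = a₀
            then (2 : ℝ) ^ (-((n : ℝ) + 1) / 2) else 0)
            = (2 : ℝ) ^ (-((n : ℝ) + 1) / 2) := by
        filter_upwards [eventually_ge_atTop (max N n)] with m hm
        have h1 : N ≤ φ m := le_trans (le_trans (le_max_left _ _) hm) hφ.le_apply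
        have h2 : n ≤ φ m := le_trans (le_trans (le_max_right _ _) hm) hφ.le_apply
        rw [if_pos ⟨h2, hN _ h1⟩]
      exact tendsto_nhds_unique (hcoord a₀)
        (Filter.Tendsto.congr' (Filter.EventuallyEq.symm hev) tendsto_const_nhds)
    have hck : ∀ k, k ≠ a₀ → ⟪E (Nat.pair n k), X⟫ = 0 := by
      intro k hk
      have hev : ∀ᶠ m in atTop,
          (if n ≤ φ m ∧ f t n (φ m) = k
            then (2 : ℝ) ^ (-((n : ℝ) + 1) / 2) else 0) = 0 := by
        filter_upwards [eventually_ge_atTop N] with m hm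
        have h1 : f t n (φ m) = a₀ := hN _ (le_trans hm hφ.le_apply)
        rw [if_neg]
        rintro ⟨-, h⟩
        exact hk (h ▸ h1)
      exact tendsto_nhds_unique (hcoord k)
        (Filter.Tendsto.congr' (Filter.EventuallyEq.symm hev) tendsto_const_nhds)
    have hproj : (Submodule.orthogonalProjectionOnto (M n) X : lp (fun _ : ℕ => ℝ) 2)
        = (2 : ℝ) ^ (-((n : ℝ) + 1) / 2) • E (Nat.pair n a₀) := by
      rw [← Submodule.starProjection_apply]
      apply Submodule.eq_starProjection_of_mem_of_inner_eq_zero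
      · exact Submodule.smul_mem _ _ (E_mem_M n a₀)
      · intro w hw
        refine Submodule.inner_left_of_mem_orthogonal hw (mem_M_orthogonal ?_)
        intro k
        rw [inner_sub_right, real_inner_smul_right, E_inner]
        by_cases hk : k = a₀
        · subst hk
          rw [hc0, if_pos rfl]
          ring
        · rw [hck k hk, if_neg (fun h => hk (Nat.pair_eq_pair.mp h).2), mul_zero, sub_zero]
    have hnorm : ‖(Submodule.orthogonalProjectionOnto (M n) X : lp (fun _ : ℕ => ℝ) 2)‖
        = (2 : ℝ) ^ (-((n : ℝ) + 1) / 2) := by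
      rw [hproj, norm_smul, E_norm, mul_one, Real.norm_eq_abs, abs_of_pos (cpos n)]
    refine ⟨⟨fun h => absurd h hA', fun h0 => ?_⟩, fun _ => hnorm⟩
    rw [hnorm] at h0
    exact absurd h0 (ne_of_gt (cpos n))
end
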